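/- (Gauge invariance of formula (26)) Let A_{ij} be a smooth symmetric tensor field on ℝ³, χ_i smooth functions and η a smooth function, and set A'_{ij} := A_{ij} + ∂_{(i}χ_{j)} + η δ_{ij}. Then A_{ij} and A'_{ij} produce the same tensor field via T^{ij} = ε^{kl(i} ∂_l ( ΔA^{j)}_{k} − ∂_p∂^{j)} A_{kp} ). -/

import Mathlib

/-- Partial derivative in the k-th Cartesian coordinate direction on ℝ^D. -/
noncomputable def pd {D : ℕ} (k : Fin D) (f : (Fin D → ℝ) → ℝ) : (Fin D → ℝ) → ℝ :=
  fun x => fderiv ℝ f x (Pi.single k 1)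

/-- Euclidean Laplacian Σ_k ∂_k∂_k. -/
noncomputable def lap {D : ℕ} (f : (Fin D → ℝ) → ℝ) : (Fin D → ℝ) → ℝ :=
  fun x => ∑ k, pd k (pd k f) x

/-- Three-dimensional Levi-Civita symbol with ε^{123} = 1. -/
def eps3 (i j k : Fin 3) : ℝ :=
  if (i,j,k) = (0,1,2) ∨ (i,j,k) = (1,2,0) ∨ (i,j,k) = (2,0,1) then 1
  else if (i,j,k) = (2,1,0) ∨ (i,j,k) = (1,0,2) ∨ (i,j,k) = (0,2,1) then -1
  else 0

/-- Formula (26): T^{ij} = ε^{kl(i} ∂_l ( ΔA^{j)}_k − ∂_p∂^{j)} A_{kp} ). -/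
noncomputable def T26 (A : Fin 3 → Fin 3 → (Fin 3 → ℝ) → ℝ) (i j : Fin 3) :
    (Fin 3 → ℝ) → ℝ :=
  fun x => (1/2 : ℝ) * ∑ k, ∑ l,
    (eps3 k l i * pd l (fun y => lap (A j k) y - ∑ p, pd j (pd p (A k p)) y) x
     + eps3 k l j * pd l (fun y => lap (A i k) y - ∑ p, pd i (pd p (A k p)) y) x)


variable {D : ℕ}

lemma contDiff_pd (k : Fin D) {f : (Fin D → ℝ) → ℝ} (hf : ContDiff ℝ (⊤ : ℕ∞) f) :
    ContDiff ℝ (⊤ : ℕ∞) (pd k f) := by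
  have h1 : ContDiff ℝ (⊤ : ℕ∞) (fderiv ℝ f) := hf.fderiv_right (by simp)
  exact h1.clm_apply contDiff_const

lemma pd_add (k : Fin D) {f g : (Fin D → ℝ) → ℝ} (hf : Differentiable ℝ f)
    (hg : Differentiable ℝ g) :
    pd k (fun x => f x + g x) = fun x => pd k f x + pd k g x := by
  funext x
  simp [pd, fderiv_fun_add (hf x) (hg x)]

lemma pd_sub (k : Fin D) {f g : (Fin D → ℝ) → ℝ} (hf : Differentiable ℝ f)
    (hg : Differentiable ℝ g) :
    pd k (fun x => f x - g x) = fun x => pd k f x - pd k g x := by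
  funext x
  simp [pd, fderiv_fun_sub (hf x) (hg x)]

lemma pd_const_mul (k : Fin D) (c : ℝ) {f : (Fin D → ℝ) → ℝ} (hf : Differentiable ℝ f) :
    pd k (fun x => c * f x) = fun x => c * pd k f x := by
  funext x
  simp [pd, fderiv_const_mul (hf x) c]

lemma pd_ite (k : Fin D) (c : Prop) [Decidable c] {f : (Fin D → ℝ) → ℝ} :
    pd k (fun x => if c then f x else 0) = fun x => if c then pd k f x else 0 := by
  by_cases h : c
  · simp [h]
  · simp only [h, if_false]
    funext x
    simp [pd]

lemma pd_sum (k : Fin D) {ι : Type*} (s : Finset ι) (F : ι → (Fin D → ℝ) → ℝ)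
    (hF : ∀ p ∈ s, Differentiable ℝ (F p)) :
    pd k (fun x => ∑ p ∈ s, F p x) = fun x => ∑ p ∈ s, pd k (F p) x := by
  funext x
  simp only [pd]
  rw [fderiv_fun_sum (fun p hp => (hF p hp) x)]
  simp

lemma pd_comm (i j : Fin D) {f : (Fin D → ℝ) → ℝ} (hf : ContDiff ℝ (⊤ : ℕ∞) f) (x) :
    pd i (pd j f) x = pd j (pd i f) x := by
  have hsym : IsSymmSndFDerivAt ℝ f x := by
    apply hf.contDiffAt.isSymmSndFDerivAt (n := (⊤:ℕ∞)) (by simp; exact WithTop.coe_le_coe.mpr le_top)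
  have hd : ContDiff ℝ (⊤ : ℕ∞) (fderiv ℝ f) := hf.fderiv_right (by simp)
  have key : ∀ v w : Fin D → ℝ, fderiv ℝ (fun y => fderiv ℝ f y w) x v
      = fderiv ℝ (fderiv ℝ f) x v w := by
    intro v w
    have hdx : DifferentiableAt ℝ (fderiv ℝ f) x :=
      (hd.differentiable (by simp)) x
    rw [fderiv_clm_apply hdx (differentiableAt_const w)]
    simp
  show fderiv ℝ (fun y => fderiv ℝ f y (Pi.single j 1)) x (Pi.single i 1)
      = fderiv ℝ (fun y => fderiv ℝ f y (Pi.single i 1)) x (Pi.single j 1)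
  rw [key, key, hsym]

lemma contDiff_lap {f : (Fin D → ℝ) → ℝ} (hf : ContDiff ℝ (⊤ : ℕ∞) f) :
    ContDiff ℝ (⊤ : ℕ∞) (lap f) :=
  ContDiff.sum (fun k _ => contDiff_pd k (contDiff_pd k hf))

lemma lap_add {f g : (Fin D → ℝ) → ℝ} (hf : ContDiff ℝ (⊤ : ℕ∞) f)
    (hg : ContDiff ℝ (⊤ : ℕ∞) g) :
    lap (fun x => f x + g x) = fun x => lap f x + lap g x := by
  have h : ∀ k : Fin D, pd k (pd k (fun x => f x + g x))
      = fun x => pd k (pd k f) x + pd k (pd k g) x := by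
    intro k
    rw [pd_add k (hf.differentiable (by simp)) (hg.differentiable (by simp))]
    exact pd_add k ((contDiff_pd k hf).differentiable (by simp))
      ((contDiff_pd k hg).differentiable (by simp))
  funext x
  simp only [lap, h]
  rw [Finset.sum_add_distrib]

lemma lap_pd_comm (i : Fin D) {f : (Fin D → ℝ) → ℝ} (hf : ContDiff ℝ (⊤ : ℕ∞) f) :
    lap (pd i f) = fun x => pd i (lap f) x := by
  have h1 : ∀ k : Fin D, pd k (pd k (pd i f)) = fun x => pd i (pd k (pd k f)) x := by
    intro k
    have e1 : pd k (pd i f) = pd i (pd k f) := funext (fun x => pd_comm k i hf x)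
    rw [e1]
    exact funext (fun x => pd_comm k i (contDiff_pd k hf) x)
  have h2 : pd i (lap f) = fun x => ∑ k, pd i (pd k (pd k f)) x :=
    pd_sum i Finset.univ (fun k => pd k (pd k f))
      (fun k _ => ((contDiff_pd k (contDiff_pd k hf)).differentiable (by simp)))
  funext x
  simp only [lap, h1, h2]


lemma eps3_antisym13 (a l b : Fin 3) : eps3 a l b = - eps3 b l a := by
  fin_cases a <;> fin_cases l <;> fin_cases b <;> simp [eps3, Fin.ext_iff, Prod.ext_iff] <;> norm_num

lemma eps_dd (i : Fin 3) {g : (Fin 3 → ℝ) → ℝ} (hg : ContDiff ℝ (⊤ : ℕ∞) g) (x) :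
    ∑ k, ∑ l, eps3 k l i * pd l (pd k g) x = 0 := by
  have h01 := pd_comm (0 : Fin 3) 1 hg x
  have h02 := pd_comm (0 : Fin 3) 2 hg x
  have h12 := pd_comm (1 : Fin 3) 2 hg x
  fin_cases i <;> simp [Fin.sum_univ_three, eps3] <;> linarith

lemma ite_sum {ι : Type*} (s : Finset ι) (c : Prop) [Decidable c] (f : ι → ℝ) :
    ∑ l ∈ s, (if c then f l else 0) = if c then ∑ l ∈ s, f l else 0 := by
  split <;> simp

section Gauge
variable (χ : Fin 3 → (Fin 3 → ℝ) → ℝ) (η : (Fin 3 → ℝ) → ℝ)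

/-- gauge tensor S_{ab} = ∂_(aχ_b) + η δ_{ab} -/
noncomputable def Sg (a b : Fin 3) : (Fin 3 → ℝ) → ℝ :=
  fun x => (1/2 : ℝ) * pd a (χ b) x + ((1/2 : ℝ) * pd b (χ a) x + (if a = b then η x else 0))

/-- G_j = ½Δχ_j − (½∂_j div χ + ∂_j η) -/
noncomputable def Gg (j : Fin 3) : (Fin 3 → ℝ) → ℝ :=
  fun x => (1/2 : ℝ) * lap (χ j) x
    - ((1/2 : ℝ) * pd j (fun y => ∑ p, pd p (χ p) y) x + pd j η x)

variable (hχ : ∀ i, ContDiff ℝ (⊤ : ℕ∞) (χ i)) (hη : ContDiff ℝ (⊤ : ℕ∞) η)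
include hχ hη

lemma Sg_smooth (a b : Fin 3) : ContDiff ℝ (⊤ : ℕ∞) (Sg χ η a b) := by
  apply ContDiff.add
  · exact contDiff_const.mul (contDiff_pd a (hχ b))
  apply ContDiff.add
  · exact contDiff_const.mul (contDiff_pd b (hχ a))
  · by_cases h : a = b <;> simp [h, hη, contDiff_const]

lemma Gg_smooth (j : Fin 3) : ContDiff ℝ (⊤ : ℕ∞) (Gg χ η j) :=
  (contDiff_const.mul (contDiff_lap (hχ j))).sub
    ((contDiff_const.mul (contDiff_pd j (ContDiff.sum fun p _ => contDiff_pd p (hχ p)))).add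
      (contDiff_pd j hη))

lemma pd_Sg (q a b : Fin 3) : pd q (Sg χ η a b) = fun y =>
    (1/2 : ℝ) * pd q (pd a (χ b)) y
      + ((1/2 : ℝ) * pd q (pd b (χ a)) y + (if a = b then pd q η y else 0)) := by
  have d1 : Differentiable ℝ (fun x => (1/2 : ℝ) * pd a (χ b) x) :=
    (contDiff_const.mul (contDiff_pd a (hχ b))).differentiable (by simp)
  have d2 : Differentiable ℝ (fun x => (1/2 : ℝ) * pd b (χ a) x) :=
    (contDiff_const.mul (contDiff_pd b (hχ a))).differentiable (by simp)
  have d3 : Differentiable ℝ (fun x => if a = b then η x else 0) := by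
    by_cases h : a = b
    · simp only [if_pos h]; exact hη.differentiable (by simp)
    · simp [h]
  show pd q (fun x => (1/2 : ℝ) * pd a (χ b) x
      + ((1/2 : ℝ) * pd b (χ a) x + (if a = b then η x else 0))) = _
  rw [pd_add q d1 (d2.fun_add d3), pd_add q d2 d3,
    pd_const_mul q _ ((contDiff_pd a (hχ b)).differentiable (by simp)),
    pd_const_mul q _ ((contDiff_pd b (hχ a)).differentiable (by simp)),
    pd_ite q (a = b)]

/-- core: Δ S_{jk} − Σ_p ∂_j∂_p S_{kp} = ∂_k G_j + δ_{jk} Δη -/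
lemma gauge_core (j k : Fin 3) :
    (fun y => lap (Sg χ η j k) y - ∑ p, pd j (pd p (Sg χ η k p)) y)
      = fun y => pd k (Gg χ η j) y + (if j = k then lap η y else 0) := by
  funext y
  -- expand lap (Sg j k)
  have hlapS : lap (Sg χ η j k) y
      = (1/2 : ℝ) * pd k (lap (χ j)) y + (1/2 : ℝ) * pd j (lap (χ k)) y
        + (if j = k then lap η y else 0) := by
    have e1 : ∀ q : Fin 3, pd q (pd q (Sg χ η j k)) = fun z =>
        (1/2 : ℝ) * pd q (pd q (pd j (χ k))) z
          + ((1/2 : ℝ) * pd q (pd q (pd k (χ j))) z + (if j = k then pd q (pd q η) z else 0)) := by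
      intro q
      rw [pd_Sg χ η hχ hη q j k]
      have d1 : Differentiable ℝ (fun z => (1/2:ℝ) * pd q (pd j (χ k)) z) :=
        (contDiff_const.mul (contDiff_pd q (contDiff_pd j (hχ k)))).differentiable (by simp)
      have d2 : Differentiable ℝ (fun z => (1/2:ℝ) * pd q (pd k (χ j)) z) :=
        (contDiff_const.mul (contDiff_pd q (contDiff_pd k (hχ j)))).differentiable (by simp)
      have d3 : Differentiable ℝ (fun z => if j = k then pd q η z else 0) := by
        by_cases h : j = k
        · simp only [if_pos h]; exact (contDiff_pd q hη).differentiable (by simp)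
        · simp [h]
      rw [pd_add q d1 (d2.fun_add d3), pd_add q d2 d3,
        pd_const_mul q _ ((contDiff_pd q (contDiff_pd j (hχ k))).differentiable (by simp)),
        pd_const_mul q _ ((contDiff_pd q (contDiff_pd k (hχ j))).differentiable (by simp)),
        pd_ite q (j = k)]
    show (∑ q, pd q (pd q (Sg χ η j k)) y) = _
    simp only [e1]
    rw [Finset.sum_add_distrib, Finset.sum_add_distrib, ← Finset.mul_sum, ← Finset.mul_sum,
      ite_sum]
    have c1 : (∑ q, pd q (pd q (pd j (χ k))) y) = pd j (lap (χ k)) y := by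
      rw [show pd j (lap (χ k)) y = lap (pd j (χ k)) y from
        (congrFun (lap_pd_comm j (hχ k)) y).symm]; rfl
    have c2 : (∑ q, pd q (pd q (pd k (χ j))) y) = pd k (lap (χ j)) y := by
      rw [show pd k (lap (χ j)) y = lap (pd k (χ j)) y from
        (congrFun (lap_pd_comm k (hχ j)) y).symm]; rfl
    rw [c1, c2]
    show (1/2:ℝ) * pd j (lap (χ k)) y + ((1/2:ℝ) * pd k (lap (χ j)) y
      + (if j = k then (∑ q, pd q (pd q η) y) else 0)) = _
    have : (if j = k then (∑ q, pd q (pd q η) y) else 0) = (if j = k then lap η y else 0) := rfl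
    rw [this]; ring
  -- expand Σ_p ∂_j ∂_p S_{kp}
  have hdiv : (∑ p, pd j (pd p (Sg χ η k p)) y)
      = (1/2 : ℝ) * pd j (pd k (fun z => ∑ p, pd p (χ p) z)) y
        + (1/2 : ℝ) * pd j (lap (χ k)) y + pd j (pd k η) y := by
    have e2 : ∀ p : Fin 3, pd j (pd p (Sg χ η k p)) = fun z =>
        (1/2 : ℝ) * pd j (pd p (pd k (χ p))) z
          + ((1/2 : ℝ) * pd j (pd p (pd p (χ k))) z + (if k = p then pd j (pd p η) z else 0)) := by
      intro p
      rw [pd_Sg χ η hχ hη p k p]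
      have d1 : Differentiable ℝ (fun z => (1/2:ℝ) * pd p (pd k (χ p)) z) :=
        (contDiff_const.mul (contDiff_pd p (contDiff_pd k (hχ p)))).differentiable (by simp)
      have d2 : Differentiable ℝ (fun z => (1/2:ℝ) * pd p (pd p (χ k)) z) :=
        (contDiff_const.mul (contDiff_pd p (contDiff_pd p (hχ k)))).differentiable (by simp)
      have d3 : Differentiable ℝ (fun z => if k = p then pd p η z else 0) := by
        by_cases h : k = p
        · simp only [if_pos h]; exact (contDiff_pd p hη).differentiable (by simp)
        · simp [h]
      rw [pd_add j d1 (d2.fun_add d3), pd_add j d2 d3,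
        pd_const_mul j _ ((contDiff_pd p (contDiff_pd k (hχ p))).differentiable (by simp)),
        pd_const_mul j _ ((contDiff_pd p (contDiff_pd p (hχ k))).differentiable (by simp)),
        pd_ite j (k = p)]
    simp only [e2]
    rw [Finset.sum_add_distrib, Finset.sum_add_distrib, ← Finset.mul_sum, ← Finset.mul_sum]
    -- third term: Σ_p ite(k=p, pd j pd p η y, 0) = pd j (pd k η) y
    have c3 : (∑ p, (if k = p then pd j (pd p η) y else 0)) = pd j (pd k η) y := by
      rw [Finset.sum_ite_eq]; simp
    -- first term: Σ_p pd j pd p pd k χ_p = pd j pd k div χ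
    have c4 : (∑ p, pd j (pd p (pd k (χ p))) y)
        = pd j (pd k (fun z => ∑ p, pd p (χ p) z)) y := by
      have e3 : ∀ p : Fin 3, pd p (pd k (χ p)) = pd k (pd p (χ p)) :=
        fun p => funext (fun z => pd_comm p k (hχ p) z)
      simp only [e3]
      have e4 : pd k (fun z => ∑ p, pd p (χ p) z) = fun z => ∑ p, pd k (pd p (χ p)) z :=
        pd_sum k Finset.univ _ (fun p _ => (contDiff_pd p (hχ p)).differentiable (by simp))
      rw [e4]
      have e5 : pd j (fun z => ∑ p, pd k (pd p (χ p)) z) y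
          = ∑ p, pd j (pd k (pd p (χ p))) y := by
        rw [pd_sum j Finset.univ _
          (fun p _ => (contDiff_pd k (contDiff_pd p (hχ p))).differentiable (by simp))]
      rw [e5]
    -- second term: Σ_p pd j pd p pd p χ_k = pd j lap χ_k
    have c5 : (∑ p, pd j (pd p (pd p (χ k))) y) = pd j (lap (χ k)) y :=
      (congrFun (pd_sum j Finset.univ (fun p => pd p (pd p (χ k)))
        (fun p _ => (contDiff_pd p (contDiff_pd p (hχ k))).differentiable (by simp))) y).symm
    rw [c3, c4, c5]
    ring
  -- expand pd k (Gg j)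
  have hG : pd k (Gg χ η j) y
      = (1/2 : ℝ) * pd k (lap (χ j)) y
        - ((1/2 : ℝ) * pd k (pd j (fun z => ∑ p, pd p (χ p) z)) y + pd k (pd j η) y) := by
    have d1 : Differentiable ℝ (fun z => (1/2:ℝ) * lap (χ j) z) :=
      (contDiff_const.mul (contDiff_lap (hχ j))).differentiable (by simp)
    have hdivs : ContDiff ℝ (⊤:ℕ∞) (fun z => ∑ p, pd p (χ p) z) :=
      ContDiff.sum fun p _ => contDiff_pd p (hχ p)
    have d2 : Differentiable ℝ (fun z => (1/2:ℝ) * pd j (fun y => ∑ p, pd p (χ p) y) z) :=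
      (contDiff_const.mul (contDiff_pd j hdivs)).differentiable (by simp)
    have d3 : Differentiable ℝ (pd j η) := (contDiff_pd j hη).differentiable (by simp)
    show pd k (fun z => (1/2:ℝ) * lap (χ j) z
      - ((1/2:ℝ) * pd j (fun y => ∑ p, pd p (χ p) y) z + pd j η z)) y = _
    rw [pd_sub k d1 (d2.fun_add d3), pd_add k d2 d3,
      pd_const_mul k _ ((contDiff_lap (hχ j)).differentiable (by simp)),
      pd_const_mul k _ ((contDiff_pd j hdivs).differentiable (by simp))]
  rw [hlapS, hdiv, hG]
  have hdivs : ContDiff ℝ (⊤:ℕ∞) (fun z => ∑ p, pd p (χ p) z) :=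
    ContDiff.sum fun p _ => contDiff_pd p (hχ p)
  have comm1 : pd j (pd k (fun z => ∑ p, pd p (χ p) z)) y
      = pd k (pd j (fun z => ∑ p, pd p (χ p) z)) y := pd_comm j k hdivs y
  have comm2 : pd j (pd k η) y = pd k (pd j η) y := pd_comm j k hη y
  rw [comm1, comm2]
  ring

end Gauge


/-- gauge invariance of formula (26): replacing A_{ij} by
A_{ij} + ∂_{(i}χ_{j)} + η δ_{ij} does not change T^{ij} of formula (26). -/
theorem stmt_16
    (A : Fin 3 → Fin 3 → (Fin 3 → ℝ) → ℝ)
    (hsmooth : ∀ i j, ContDiff ℝ (⊤ : ℕ∞) (A i j))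
    (hAsym : ∀ i j x, A i j x = A j i x)
    (χ : Fin 3 → (Fin 3 → ℝ) → ℝ)
    (hχ : ∀ i, ContDiff ℝ (⊤ : ℕ∞) (χ i))
    (η : (Fin 3 → ℝ) → ℝ)
    (hη : ContDiff ℝ (⊤ : ℕ∞) η)
    (A' : Fin 3 → Fin 3 → (Fin 3 → ℝ) → ℝ)
    (hA' : ∀ i j x, A' i j x = A i j x
      + (1/2 : ℝ) * (pd i (χ j) x + pd j (χ i) x)
      + η x * (if i = j then (1 : ℝ) else 0)) :
    ∀ i j x, T26 A' i j x = T26 A i j x := by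
  have hA'eq : ∀ a b, A' a b = fun x => A a b x + Sg χ η a b x := by
    intro a b; funext x; rw [hA' a b x]
    by_cases h : a = b <;> simp [Sg, h] <;> ring
  have hInner : ∀ j k : Fin 3,
      (fun y => lap (A' j k) y - ∑ p, pd j (pd p (A' k p)) y)
        = fun y => (lap (A j k) y - ∑ p, pd j (pd p (A k p)) y)
          + (pd k (Gg χ η j) y + (if j = k then lap η y else 0)) := by
    intro j k
    have h1 : lap (A' j k) = fun y => lap (A j k) y + lap (Sg χ η j k) y := by
      rw [hA'eq j k]; exact lap_add (hsmooth j k) (Sg_smooth χ η hχ hη j k)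
    have h2 : ∀ p, pd j (pd p (A' k p))
        = fun y => pd j (pd p (A k p)) y + pd j (pd p (Sg χ η k p)) y := by
      intro p
      have e : pd p (A' k p) = fun y => pd p (A k p) y + pd p (Sg χ η k p) y := by
        rw [hA'eq k p]
        exact pd_add p ((hsmooth k p).differentiable (by simp))
          ((Sg_smooth χ η hχ hη k p).differentiable (by simp))
      rw [e]
      exact pd_add j ((contDiff_pd p (hsmooth k p)).differentiable (by simp))
        ((contDiff_pd p (Sg_smooth χ η hχ hη k p)).differentiable (by simp))
    funext y
    rw [h1]
    simp only [h2]
    rw [Finset.sum_add_distrib]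
    have hc := congrFun (gauge_core χ η hχ hη j k) y
    linarith [hc]
  intro i j x
  simp only [T26]
  simp only [hInner]
  have hpd : ∀ (a k l : Fin 3),
      pd l (fun y => (lap (A a k) y - ∑ p, pd a (pd p (A k p)) y)
        + (pd k (Gg χ η a) y + (if a = k then lap η y else 0)))
      = fun z => pd l (fun y => lap (A a k) y - ∑ p, pd a (pd p (A k p)) y) z
          + (pd l (pd k (Gg χ η a)) z + (if a = k then pd l (lap η) z else 0)) := by
    intro a k l
    have dBase : Differentiable ℝ (fun y => lap (A a k) y - ∑ p, pd a (pd p (A k p)) y) :=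
      ((contDiff_lap (hsmooth a k)).sub
        (ContDiff.sum fun p _ => contDiff_pd a (contDiff_pd p (hsmooth k p)))).differentiable
        (by simp)
    have dG : Differentiable ℝ (pd k (Gg χ η a)) :=
      (contDiff_pd k (Gg_smooth χ η hχ hη a)).differentiable (by simp)
    have dIte : Differentiable ℝ (fun y => if a = k then lap η y else 0) := by
      by_cases h : a = k
      · simp only [if_pos h]; exact (contDiff_lap hη).differentiable (by simp)
      · simp [h]
    rw [pd_add l dBase (dG.fun_add dIte), pd_add l dG dIte, pd_ite l (a = k)]
  simp only [hpd]
  have ringer : ∀ (e e' p p' q q' r r' : ℝ),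
      e * (p + (q + r)) + e' * (p' + (q' + r'))
        = (e * p + e' * p') + ((e * q + e' * q') + (e * r + e' * r')) := by
    intros; ring
  simp only [ringer]
  simp only [Finset.sum_add_distrib]
  have hz1 : ∀ (a b : Fin 3),
      (∑ k, ∑ l, eps3 k l a * (if b = k then pd l (lap η) x else 0))
        = ∑ l, eps3 b l a * pd l (lap η) x := by
    intro a b
    have e : ∀ k : Fin 3, (∑ l, eps3 k l a * (if b = k then pd l (lap η) x else 0))
        = if b = k then ∑ l, eps3 k l a * pd l (lap η) x else 0 := by
      intro k; by_cases h : b = k <;> simp [h]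
    simp only [e]
    rw [Finset.sum_ite_eq]
    simp
  have hz : (∑ l, eps3 j l i * pd l (lap η) x) + (∑ l, eps3 i l j * pd l (lap η) x) = 0 := by
    rw [← Finset.sum_add_distrib]
    apply Finset.sum_eq_zero
    intro l _
    rw [eps3_antisym13 j l i]; ring
  have g1 := eps_dd i (Gg_smooth χ η hχ hη j) x
  have g2 := eps_dd j (Gg_smooth χ η hχ hη i) x
  have z1 := hz1 i j
  have z2 := hz1 j i
  linarith [g1, g2, z1, z2, hz]
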